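/- For integers N ≥ 2 and L_max ≥ 1, the number of Clenshaw-Curtis sparse grid points satisfies M_{L_max} ≤ Σ_{L=1}^{L_max} 2^L·C(N-1+L, N-1) ≤ e^{N-1}·2^{L_max+1}·(1 + L_max/(N-1))^{N-1}. -/

import Mathlib

open Finset

lemma aux_choose_bound (k m : ℕ) (hk : 0 < k) :
    ((k + m).choose k : ℝ) ≤ Real.exp 1 ^ k * (1 + (m : ℝ) / k) ^ k := by
  have hk' : (0 : ℝ) < k := by exact_mod_cast hk
  have h1 : ((k + m).choose k : ℝ) ≤ ((k + m : ℕ) : ℝ) ^ k / (Nat.factorial k : ℝ) :=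
    Nat.choose_le_pow_div k (k + m)
  have h2 : (k : ℝ) ^ k / (Nat.factorial k : ℝ) ≤ Real.exp k := by
    exact_mod_cast Real.pow_div_factorial_le_exp (x := (k : ℝ)) (by positivity) k
  have hfac : (0 : ℝ) < (Nat.factorial k : ℝ) := by exact_mod_cast k.factorial_pos
  have key : ((k + m : ℕ) : ℝ) ^ k / (Nat.factorial k : ℝ)
      = (1 + (m : ℝ) / k) ^ k * ((k : ℝ) ^ k / (Nat.factorial k : ℝ)) := by
    push_cast
    field_simp
    rw [div_pow, div_mul_cancel₀ _ (by positivity)]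
  have hexp : Real.exp (k : ℝ) = Real.exp 1 ^ k := by
    rw [← Real.exp_nat_mul]; norm_num
  calc ((k + m).choose k : ℝ) ≤ ((k + m : ℕ) : ℝ) ^ k / (Nat.factorial k : ℝ) := h1
    _ = (1 + (m : ℝ) / k) ^ k * ((k : ℝ) ^ k / (Nat.factorial k : ℝ)) := key
    _ ≤ (1 + (m : ℝ) / k) ^ k * Real.exp k := by
        apply mul_le_mul_of_nonneg_left h2; positivity
    _ = Real.exp 1 ^ k * (1 + (m : ℝ) / k) ^ k := by rw [hexp, mul_comm]

/-- Sparse-grid point count bound: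
`M_{L_max} ≤ ∑_{L=1}^{L_max} 2^L·C(N-1+L, N-1) ≤ e^{N-1}·2^{L_max+1}·(1+L_max/(N-1))^{N-1}`. -/
theorem sparse_grid_point_count (N Lmax M : ℕ) (hN : 2 ≤ N) (hL : 1 ≤ Lmax)
    (hM : (M : ℝ) ≤ ∑ L ∈ Finset.Icc 1 Lmax,
      (2 : ℝ) ^ L * ((N - 1 + L).choose (N - 1) : ℝ)) :
    (∑ L ∈ Finset.Icc 1 Lmax, (2 : ℝ) ^ L * ((N - 1 + L).choose (N - 1) : ℝ)) ≤
        Real.exp 1 ^ (N - 1) * 2 ^ (Lmax + 1) *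
          (1 + (Lmax : ℝ) / ((N : ℝ) - 1)) ^ (N - 1) ∧
      (M : ℝ) ≤ Real.exp 1 ^ (N - 1) * 2 ^ (Lmax + 1) *
          (1 + (Lmax : ℝ) / ((N : ℝ) - 1)) ^ (N - 1) := by
  set k := N - 1 with hkdef
  have hk : 0 < k := by omega
  have hNk : (N : ℝ) - 1 = (k : ℝ) := by
    have : N = k + 1 := by omega
    rw [this]; push_cast; ring
  -- step 1: bound each binomial by the top one
  have hmono : ∀ L ∈ Finset.Icc 1 Lmax,
      (2 : ℝ) ^ L * ((k + L).choose k : ℝ) ≤ (2 : ℝ) ^ L * ((k + Lmax).choose k : ℝ) := by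
    intro L hLmem
    simp only [Finset.mem_Icc] at hLmem
    apply mul_le_mul_of_nonneg_left _ (by positivity)
    exact_mod_cast Nat.choose_le_choose k (by omega : k + L ≤ k + Lmax)
  have hsum2 : (∑ L ∈ Finset.Icc 1 Lmax, (2 : ℝ) ^ L) ≤ 2 ^ (Lmax + 1) := by
    have : (∑ L ∈ Finset.range (Lmax + 1), (2 : ℝ) ^ L) = 2 ^ (Lmax + 1) - 1 := by
      rw [geom_sum_eq (by norm_num)]; norm_num
    have hsub : Finset.Icc 1 Lmax ⊆ Finset.range (Lmax + 1) := by
      intro x hx; simp only [Finset.mem_Icc] at hx; simp; omega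
    calc (∑ L ∈ Finset.Icc 1 Lmax, (2 : ℝ) ^ L)
        ≤ ∑ L ∈ Finset.range (Lmax + 1), (2 : ℝ) ^ L :=
          Finset.sum_le_sum_of_subset_of_nonneg hsub (fun _ _ _ => by positivity)
      _ = 2 ^ (Lmax + 1) - 1 := this
      _ ≤ 2 ^ (Lmax + 1) := by linarith
  have hmain : (∑ L ∈ Finset.Icc 1 Lmax, (2 : ℝ) ^ L * ((k + L).choose k : ℝ)) ≤
      Real.exp 1 ^ k * 2 ^ (Lmax + 1) * (1 + (Lmax : ℝ) / k) ^ k := by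
    calc (∑ L ∈ Finset.Icc 1 Lmax, (2 : ℝ) ^ L * ((k + L).choose k : ℝ))
        ≤ ∑ L ∈ Finset.Icc 1 Lmax, (2 : ℝ) ^ L * ((k + Lmax).choose k : ℝ) :=
          Finset.sum_le_sum hmono
      _ = (∑ L ∈ Finset.Icc 1 Lmax, (2 : ℝ) ^ L) * ((k + Lmax).choose k : ℝ) := by
          rw [Finset.sum_mul]
      _ ≤ 2 ^ (Lmax + 1) * ((k + Lmax).choose k : ℝ) :=
          mul_le_mul_of_nonneg_right hsum2 (by positivity)
      _ ≤ 2 ^ (Lmax + 1) * (Real.exp 1 ^ k * (1 + (Lmax : ℝ) / k) ^ k) :=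
          mul_le_mul_of_nonneg_left (aux_choose_bound k Lmax hk) (by positivity)
      _ = Real.exp 1 ^ k * 2 ^ (Lmax + 1) * (1 + (Lmax : ℝ) / k) ^ k := by ring
  rw [hNk]
  exact ⟨hmain, le_trans hM hmain⟩
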